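/- arXiv:2601.12550 — 2 statements merged into one kernel-verified Lean document; each statement's English description precedes it below -/
import Mathlib

section
/- Let X be a DG B^e-module. The map ϖ : Hom_{B^e}(J, X) → Der_A(B, X) sending a graded B^e-linear map f of degree n to f ∘ δ is an isomorphism of topological left DG B-modules; in particular Der_A(B,X) ≅ Hom_{B^e}(J,X). -/
/- ------------------------------------------------------------------
A self-contained framework for differential graded (DG) homological
algebra, following Nasseh–Ono–Yoshino, "Connections and naïve lifting
of DG modules".
------------------------------------------------------------------ -/

noncomputable section

namespace DG

universe u

/-- The sign `(-1)^n` for `n : ℤ`. -/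
def sgn (n : ℤ) : ℤ := ((-1 : ℤˣ) ^ n : ℤˣ)

/-- A (non-negatively graded, strictly graded-commutative) DG `R`-algebra:
a graded `R`-algebra `A = ⊕_{n ≥ 0} A_n` with `ab = (-1)^{|a||b|} ba`,
`a² = 0` for `|a|` odd, and a degree `-1` differential `d` with `d ∘ d = 0`
satisfying the Leibniz rule. -/
structure DGAlg (R : Type u) [CommRing R] : Type (u + 1) where
  carrier : Type u
  [ring : Ring carrier]
  [alg : Algebra R carrier]
  gr : ℤ → Submodule R carrier
  internal : DirectSum.IsInternal gr
  nonneg : ∀ i : ℤ, i < 0 → gr i = ⊥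
  one_mem : (1 : carrier) ∈ gr 0
  mul_mem : ∀ {i j : ℤ} {a b : carrier}, a ∈ gr i → b ∈ gr j → a * b ∈ gr (i + j)
  gcomm : ∀ {i j : ℤ} {a b : carrier}, a ∈ gr i → b ∈ gr j → a * b = sgn (i * j) • (b * a)
  sq_zero : ∀ {i : ℤ} {a : carrier}, a ∈ gr i → Odd i → a * a = 0
  d : carrier →ₗ[R] carrier
  d_mem : ∀ {i : ℤ} {a : carrier}, a ∈ gr i → d a ∈ gr (i - 1)
  d_d : ∀ a : carrier, d (d a) = 0
  leibniz : ∀ {i : ℤ} {a : carrier} (b : carrier), a ∈ gr i →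
    d (a * b) = d a * b + sgn i • (a * d b)

attribute [instance] DGAlg.ring DGAlg.alg

variable {R : Type u} [CommRing R]

/-- A right DG module over a DG `R`-algebra `S`. -/
structure DGMod (S : DGAlg R) : Type (u + 1) where
  carrier : Type u
  [acg : AddCommGroup carrier]
  [mod : Module R carrier]
  /-- the right `S`-action -/
  smul : carrier → S.carrier → carrier
  smul_add : ∀ (m : carrier) (a b : S.carrier), smul m (a + b) = smul m a + smul m b
  add_smul : ∀ (m n : carrier) (a : S.carrier), smul (m + n) a = smul m a + smul n a
  smul_rsmul : ∀ (r : R) (m : carrier) (a : S.carrier), smul (r • m) a = r • smul m a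
  smul_one : ∀ m : carrier, smul m 1 = m
  smul_mul : ∀ (m : carrier) (a b : S.carrier), smul m (a * b) = smul (smul m a) b
  smul_algebraMap : ∀ (r : R) (m : carrier), smul m (algebraMap R S.carrier r) = r • m
  gr : ℤ → Submodule R carrier
  internal : DirectSum.IsInternal gr
  smul_mem : ∀ {i j : ℤ} {m : carrier} {a : S.carrier},
    m ∈ gr i → a ∈ S.gr j → smul m a ∈ gr (i + j)
  d : carrier →ₗ[R] carrier
  d_mem : ∀ {i : ℤ} {m : carrier}, m ∈ gr i → d m ∈ gr (i - 1)
  d_d : ∀ m : carrier, d (d m) = 0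
  leibniz : ∀ {i : ℤ} {m : carrier} (a : S.carrier), m ∈ gr i →
    d (smul m a) = smul (d m) a + sgn i • smul m (S.d a)

attribute [instance] DGMod.acg DGMod.mod

/-- Decomposition of a DG algebra into its homogeneous components. -/
noncomputable def DGAlg.dec (S : DGAlg R) : S.carrier ≃ DirectSum ℤ (fun i => S.gr i) :=
  (Equiv.ofBijective _ S.internal).symm

/-- Decomposition of a DG module into its homogeneous components. -/
noncomputable def DGMod.dec {S : DGAlg R} (M : DGMod S) :
    M.carrier ≃ DirectSum ℤ (fun i => M.gr i) :=
  (Equiv.ofBijective _ M.internal).symm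

/-- The left action `a • x := (-1)^{|a||x|} x a` on a right DG module over the
strictly graded-commutative DG algebra `S`, extended bilinearly. -/
noncomputable def DGMod.lsmul {S : DGAlg R} (M : DGMod S) (a : S.carrier) (x : M.carrier) :
    M.carrier :=
  (DFinsupp.sumAddHom (fun i => AddMonoidHom.mk'
    (fun ai : S.gr i => DFinsupp.sumAddHom (fun j => AddMonoidHom.mk'
      (fun xj : M.gr j => sgn (i * j) • M.smul (xj : M.carrier) (ai : S.carrier))
      (by intro x y; simp [M.add_smul, smul_add]))
    )
    (by
      intro ai ai'
      refine DFinsupp.addHom_ext fun j xj => ?_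
      simp [DFinsupp.sumAddHom_single, M.smul_add, smul_add]))
    (S.dec a)) (M.dec x)

/-- `f : M → N` is a graded `S`-linear map of degree `n`. -/
def IsGLin {S : DGAlg R} (M N : DGMod S) (n : ℤ) (f : M.carrier → N.carrier) : Prop :=
  (∀ x y : M.carrier, f (x + y) = f x + f y) ∧
  (∀ (r : R) (x : M.carrier), f (r • x) = r • f x) ∧
  (∀ (x : M.carrier) (a : S.carrier), f (M.smul x a) = N.smul (f x) a) ∧
  (∀ i : ℤ, ∀ x ∈ M.gr i, f x ∈ N.gr (i + n))

/-- `f` belongs to `Hom_S(M,N) = ⊕_{n ∈ ℤ} Hom_{gr(S)}(M, N(n))`, i.e. `f` is a finite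
sum of homogeneous graded `S`-linear maps. -/
def InSHom {S : DGAlg R} (M N : DGMod S) (f : M.carrier → N.carrier) : Prop :=
  ∃ (s : Finset ℤ) (g : ℤ → M.carrier → N.carrier),
    (∀ n ∈ s, IsGLin M N n (g n)) ∧ ∀ x, f x = ∑ n ∈ s, g n x

/-- A homomorphism of DG `R`-algebras. -/
structure DGHom (S T : DGAlg R) : Type u where
  toFun : S.carrier → T.carrier
  map_one : toFun 1 = 1
  map_mul : ∀ a b, toFun (a * b) = toFun a * toFun b
  map_add : ∀ a b, toFun (a + b) = toFun a + toFun b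
  map_algebraMap : ∀ r : R, toFun (algebraMap R S.carrier r) = algebraMap R T.carrier r
  map_gr : ∀ {i : ℤ} {a : S.carrier}, a ∈ S.gr i → toFun a ∈ T.gr i
  map_d : ∀ a, toFun (S.d a) = T.d (toFun a)

/-- The underlying ring homomorphism of a DG algebra homomorphism. -/
def DGHom.toRingHom {S T : DGAlg R} (f : DGHom S T) : S.carrier →+* T.carrier where
  toFun := f.toFun
  map_one' := f.map_one
  map_mul' := f.map_mul
  map_zero' := by
    have h := f.map_add 0 0
    rw [add_zero] at h
    exact (add_eq_left.mp h.symm)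
  map_add' := f.map_add

/-- The basic setup of the paper: a DG `R`-algebra homomorphism `φ : A → B` with `B`
projective as an underlying (graded) `A`-module, together with the enveloping DG algebra
`E = Bᵉ = B ⊗_A B` (axiomatized by its structure maps `inl : b ↦ b ⊗ 1`,
`inr : b ↦ 1 ⊗ b`, the multiplication map `mulB = π_B : Bᵉ → B` and the universal
property of the tensor product), the diagonal ideal `J = ker π_B` (a DG `Bᵉ`-module
with structure monomorphism `ιJ`), and the universal derivation
`δ : B → J`, `δ(b) = b ⊗ 1 - 1 ⊗ b`. -/
structure EnvSetup (R : Type u) [CommRing R] : Type (u + 1) where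
  A : DGAlg R
  B : DGAlg R
  φ : DGHom A B
  projB :
    letI : Module A.carrier B.carrier := Module.compHom B.carrier φ.toRingHom
    Module.Projective A.carrier B.carrier
  E : DGAlg R
  inl : DGHom B E
  inr : DGHom B E
  inl_inr_phi : ∀ a : A.carrier, inl.toFun (φ.toFun a) = inr.toFun (φ.toFun a)
  mulB : DGHom E B
  mulB_inl : ∀ b, mulB.toFun (inl.toFun b) = b
  mulB_inr : ∀ b, mulB.toFun (inr.toFun b) = b
  span : ∀ x : E.carrier,
    x ∈ Submodule.span R {y : E.carrier | ∃ b b', y = inl.toFun b * inr.toFun b'}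
  univ : ∀ (Q : Type u) [AddCommGroup Q] [Module R Q] (h : B.carrier → B.carrier → Q),
    (∀ b₁ b₂ b', h (b₁ + b₂) b' = h b₁ b' + h b₂ b') →
    (∀ b b₁ b₂, h b (b₁ + b₂) = h b b₁ + h b b₂) →
    (∀ (r : R) b b', h (r • b) b' = r • h b b') →
    (∀ (r : R) b b', h b (r • b') = r • h b b') →
    (∀ (a : A.carrier) (b b' : B.carrier), h (b * φ.toFun a) b' = h b (φ.toFun a * b')) →
    ∃! H : E.carrier →ₗ[R] Q, ∀ b b', H (inl.toFun b * inr.toFun b') = h b b'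
  J : DGMod E
  ιJ : J.carrier → E.carrier
  ιJ_add : ∀ x y, ιJ (x + y) = ιJ x + ιJ y
  ιJ_rsmul : ∀ (r : R) x, ιJ (r • x) = r • ιJ x
  ιJ_smul : ∀ x e, ιJ (J.smul x e) = ιJ x * e
  ιJ_gr : ∀ (i : ℤ) (x : J.carrier), x ∈ J.gr i ↔ ιJ x ∈ E.gr i
  ιJ_d : ∀ x, ιJ (J.d x) = E.d (ιJ x)
  ιJ_inj : Function.Injective ιJ
  ιJ_range : ∀ e : E.carrier, (∃ x, ιJ x = e) ↔ mulB.toFun e = 0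
  δ : B.carrier → J.carrier
  ιJ_δ : ∀ b, ιJ (δ b) = inl.toFun b - inr.toFun b

/-- `D : B → X` is an `A`-derivation of degree `n` with values in the DG `Bᵉ`-module `X`:
an `A`-linear graded map of degree `n` satisfying the Leibniz rule
`D(bc) = D(b)·(1⊗c) + (-1)^{|b||c|} D(c)·(b⊗1)`
(equivalently, `D(bc) = D(b)c + (-1)^{|D||b|} b D(c)`). -/
def IsDer (P : EnvSetup R) (X : DGMod P.E) (n : ℤ) (D : P.B.carrier → X.carrier) : Prop :=
  (∀ b c, D (b + c) = D b + D c) ∧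
  (∀ (r : R) b, D (r • b) = r • D b) ∧
  (∀ (b : P.B.carrier) (a : P.A.carrier),
    D (b * P.φ.toFun a) = X.smul (D b) (P.inr.toFun (P.φ.toFun a))) ∧
  (∀ i : ℤ, ∀ b ∈ P.B.gr i, D b ∈ X.gr (i + n)) ∧
  (∀ (i j : ℤ) (b c : P.B.carrier), b ∈ P.B.gr i → c ∈ P.B.gr j →
    D (b * c) = X.smul (D b) (P.inr.toFun c) + sgn (i * j) • X.smul (D c) (P.inl.toFun b))

/-- `D` belongs to `Der_A(B,X) = ⊕_{n ∈ ℤ} Der_A(B,X)_n`. -/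
def InSDer (P : EnvSetup R) (X : DGMod P.E) (D : P.B.carrier → X.carrier) : Prop :=
  ∃ (s : Finset ℤ) (g : ℤ → P.B.carrier → X.carrier),
    (∀ n ∈ s, IsDer P X n (g n)) ∧ ∀ b, D b = ∑ n ∈ s, g n b

end DG
/- Part 2 appended to common -/
namespace DG

variable {R : Type u} [CommRing R]

/-- The DG tensor product `N ⊗_B X` of a DG `B`-module `N` and a DG `Bᵉ`-module `X`
(a DG `B`-module via the right `B`-action on `X` through `inr`), axiomatized by its
structure map `t : (n,x) ↦ n ⊗ x`, `B`-balancedness `nb ⊗ x = (-1)^{|b||x|} n ⊗ x·(b⊗1)`,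
spanning, and the universal property. -/
structure TensorBX (P : EnvSetup R) (N : DGMod P.B) (X : DGMod P.E) : Type (u + 1) where
  T : DGMod P.B
  t : N.carrier → X.carrier → T.carrier
  t_addl : ∀ m m' x, t (m + m') x = t m x + t m' x
  t_addr : ∀ m x x', t m (x + x') = t m x + t m x'
  t_rsml : ∀ (r : R) m x, t (r • m) x = r • t m x
  t_rsmr : ∀ (r : R) m x, t m (r • x) = r • t m x
  t_smul : ∀ m x b, t m (X.smul x (P.inr.toFun b)) = T.smul (t m x) b
  t_bal : ∀ {i j : ℤ} (m : N.carrier) (x : X.carrier) (b : P.B.carrier),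
    b ∈ P.B.gr i → x ∈ X.gr j →
    t (N.smul m b) x = sgn (i * j) • t m (X.smul x (P.inl.toFun b))
  t_gr : ∀ {i j : ℤ} {m x}, m ∈ N.gr i → x ∈ X.gr j → t m x ∈ T.gr (i + j)
  t_d : ∀ {i : ℤ} (m x), m ∈ N.gr i → T.d (t m x) = t (N.d m) x + sgn i • t m (X.d x)
  span : ∀ y : T.carrier, y ∈ Submodule.span R {z : T.carrier | ∃ m x, z = t m x}
  univ : ∀ (Q : Type u) [AddCommGroup Q] [Module R Q] (h : N.carrier → X.carrier → Q),
    (∀ m m' x, h (m + m') x = h m x + h m' x) →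
    (∀ m x x', h m (x + x') = h m x + h m x') →
    (∀ (r : R) m x, h (r • m) x = r • h m x) →
    (∀ (r : R) m x, h m (r • x) = r • h m x) →
    (∀ {i j : ℤ} (m x) (b : P.B.carrier), b ∈ P.B.gr i → x ∈ X.gr j →
      h (N.smul m b) x = sgn (i * j) • h m (X.smul x (P.inl.toFun b))) →
    ∃! H : T.carrier →ₗ[R] Q, ∀ m x, H (t m x) = h m x

/-- `ψ : N → N ⊗_B X` is a `D`-connection on `N` along `X` of degree `n = |D|`:
a graded `A`-linear map of degree `n` with
`ψ(xb) = ψ(x)b + (-1)^{|D||x|} x ⊗ D(b)`. -/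
def IsConn {P : EnvSetup R} {N : DGMod P.B} {X : DGMod P.E} (τ : TensorBX P N X)
    (n : ℤ) (D : P.B.carrier → X.carrier) (ψ : N.carrier → τ.T.carrier) : Prop :=
  (∀ x y : N.carrier, ψ (x + y) = ψ x + ψ y) ∧
  (∀ (r : R) (x : N.carrier), ψ (r • x) = r • ψ x) ∧
  (∀ i : ℤ, ∀ x ∈ N.gr i, ψ x ∈ τ.T.gr (i + n)) ∧
  (∀ (i : ℤ) (x : N.carrier) (b : P.B.carrier), x ∈ N.gr i →
    ψ (N.smul x b) = τ.T.smul (ψ x) b + sgn (n * i) • τ.t x (D b))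

/-- `ψ` belongs to `Conn(N, N ⊗_B X) = ⊕_{n ∈ ℤ} Conn(N, N ⊗_B X)_n`. -/
def InSConn {P : EnvSetup R} {N : DGMod P.B} {X : DGMod P.E} (τ : TensorBX P N X)
    (ψ : N.carrier → τ.T.carrier) : Prop :=
  ∃ (s : Finset ℤ) (g : ℤ → N.carrier → τ.T.carrier) (Df : ℤ → P.B.carrier → X.carrier),
    (∀ n ∈ s, IsDer P X n (Df n) ∧ IsConn τ n (Df n) (g n)) ∧ ∀ x, ψ x = ∑ n ∈ s, g n x

/-- An `Der_A(B,X)`-connection on `N` (along the `Bᵉ`-module `X`): a DG `B`-module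
homomorphism `∇ : Der_A(B,X) → Conn(N, N ⊗_B X)` such that `∇_D` is a `D`-connection
for every `D`.  (Equivalently, a DG `B`-module splitting of `ν`.) -/
def IsLConn {P : EnvSetup R} {N : DGMod P.B} {X : DGMod P.E} (τ : TensorBX P N X)
    (Cn : (P.B.carrier → X.carrier) → N.carrier → τ.T.carrier) : Prop :=
  (∀ (n : ℤ) (D), IsDer P X n D → IsConn τ n D (Cn D)) ∧
  (∀ D D', InSDer P X D → InSDer P X D' →
    ∀ x, Cn (fun b => D b + D' b) x = Cn D x + Cn D' x) ∧
  (∀ (r : R) (D), InSDer P X D → ∀ x, Cn (fun b => r • D b) x = r • Cn D x) ∧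
  (∀ (k n : ℤ) (b : P.B.carrier) (D), b ∈ P.B.gr k → IsDer P X n D →
    ∀ x, Cn (fun c => X.lsmul (P.inl.toFun b) (D c)) x = τ.T.lsmul b (Cn D x)) ∧
  (∀ (n : ℤ) (D), IsDer P X n D →
    ∀ x, Cn (fun b => X.d (D b) - sgn n • D (P.B.d b)) x
      = τ.T.d (Cn D x) - sgn n • Cn D (N.d x))

/-- The DG tensor product `N|_A ⊗_A B` (a DG `B`-module through the right factor),
together with the canonical DG `B`-module epimorphism `pr = π_N : N|_A ⊗_A B → N`,
`n ⊗ b ↦ nb`. -/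
structure TensorAB (P : EnvSetup R) (N : DGMod P.B) : Type (u + 1) where
  T : DGMod P.B
  t : N.carrier → P.B.carrier → T.carrier
  t_addl : ∀ m m' b, t (m + m') b = t m b + t m' b
  t_addr : ∀ m b b', t m (b + b') = t m b + t m b'
  t_rsml : ∀ (r : R) m b, t (r • m) b = r • t m b
  t_rsmr : ∀ (r : R) m b, t m (r • b) = r • t m b
  t_smul : ∀ m b b', t m (b * b') = T.smul (t m b) b'
  t_bal : ∀ (m : N.carrier) (a : P.A.carrier) (b : P.B.carrier),
    t (N.smul m (P.φ.toFun a)) b = t m (P.φ.toFun a * b)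
  t_gr : ∀ {i j : ℤ} {m b}, m ∈ N.gr i → b ∈ P.B.gr j → t m b ∈ T.gr (i + j)
  t_d : ∀ {i : ℤ} (m b), m ∈ N.gr i → T.d (t m b) = t (N.d m) b + sgn i • t m (P.B.d b)
  span : ∀ y : T.carrier, y ∈ Submodule.span R {z : T.carrier | ∃ m b, z = t m b}
  univ : ∀ (Q : Type u) [AddCommGroup Q] [Module R Q] (h : N.carrier → P.B.carrier → Q),
    (∀ m m' b, h (m + m') b = h m b + h m' b) →
    (∀ m b b', h m (b + b') = h m b + h m b') →
    (∀ (r : R) m b, h (r • m) b = r • h m b) →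
    (∀ (r : R) m b, h m (r • b) = r • h m b) →
    (∀ (m : N.carrier) (a : P.A.carrier) (b : P.B.carrier),
      h (N.smul m (P.φ.toFun a)) b = h m (P.φ.toFun a * b)) →
    ∃! H : T.carrier →ₗ[R] Q, ∀ m b, H (t m b) = h m b
  pr : T.carrier → N.carrier
  pr_add : ∀ y y', pr (y + y') = pr y + pr y'
  pr_rsmul : ∀ (r : R) y, pr (r • y) = r • pr y
  pr_smul : ∀ y b, pr (T.smul y b) = N.smul (pr y) b
  pr_gr : ∀ {i : ℤ} {y}, y ∈ T.gr i → pr y ∈ N.gr i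
  pr_d : ∀ y, pr (T.d y) = N.d (pr y)
  pr_t : ∀ m b, pr (t m b) = N.smul m b

/-- `N` is naïvely liftable to `A`: the DG `B`-module epimorphism
`π_N : N|_A ⊗_A B → N` has a right inverse in the category of DG `B`-modules. -/
def NaivelyLiftable {P : EnvSetup R} {N : DGMod P.B} (σ : TensorAB P N) : Prop :=
  ∃ ρ : N.carrier → σ.T.carrier, IsGLin N σ.T 0 ρ ∧
    (∀ x, σ.T.d (ρ x) = ρ (N.d x)) ∧ ∀ x, σ.pr (ρ x) = x

end DG
/- Part 3 appended to common -/
namespace DG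

variable {R : Type u} [CommRing R]

/-- A DG `Bᵉ`-module `X` regarded as a DG `B`-module via `inr : B → Bᵉ`
(e.g. when `XJ = 0`, via `B ≅ Bᵉ/J`). -/
def EnvSetup.toBMod (P : EnvSetup R) (X : DGMod P.E) : DGMod P.B where
  carrier := X.carrier
  acg := X.acg
  mod := X.mod
  smul x b := X.smul x (P.inr.toFun b)
  smul_add m a b := by simp only [P.inr.map_add, X.smul_add]
  add_smul m n a := by simp only [X.add_smul]
  smul_rsmul r m a := by simp only [X.smul_rsmul]
  smul_one m := by simp only [P.inr.map_one, X.smul_one]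
  smul_mul m a b := by simp only [P.inr.map_mul, X.smul_mul]
  smul_algebraMap r m := by simp only [P.inr.map_algebraMap, X.smul_algebraMap]
  gr := X.gr
  internal := X.internal
  smul_mem h1 h2 := X.smul_mem h1 (P.inr.map_gr h2)
  d := X.d
  d_mem := X.d_mem
  d_d := X.d_d
  leibniz a h := by
    simp only [P.inr.map_d]
    exact X.leibniz (P.inr.toFun a) h

/-- A DG algebra `S` regarded as a DG module over itself. -/
def DGAlg.toSelfMod (S : DGAlg R) : DGMod S where
  carrier := S.carrier
  smul a b := a * b
  smul_add := mul_add
  add_smul := add_mul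
  smul_rsmul r m a := smul_mul_assoc r m a
  smul_one := mul_one
  smul_mul m a b := (mul_assoc m a b).symm
  smul_algebraMap r m := by rw [Algebra.smul_def, Algebra.commutes]
  gr := S.gr
  internal := S.internal
  smul_mem := S.mul_mem
  d := S.d
  d_mem := S.d_mem
  d_d := S.d_d
  leibniz := S.leibniz

/-- The DG tensor product `N ⊗_B X` of two DG `B`-modules. -/
structure TensorBB (P : EnvSetup R) (N X : DGMod P.B) : Type (u + 1) where
  T : DGMod P.B
  t : N.carrier → X.carrier → T.carrier
  t_addl : ∀ m m' x, t (m + m') x = t m x + t m' x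
  t_addr : ∀ m x x', t m (x + x') = t m x + t m x'
  t_rsml : ∀ (r : R) m x, t (r • m) x = r • t m x
  t_rsmr : ∀ (r : R) m x, t m (r • x) = r • t m x
  t_smul : ∀ m x b, t m (X.smul x b) = T.smul (t m x) b
  t_bal : ∀ {i j : ℤ} (m : N.carrier) (x : X.carrier) (b : P.B.carrier),
    b ∈ P.B.gr i → x ∈ X.gr j →
    t (N.smul m b) x = sgn (i * j) • t m (X.smul x b)
  t_gr : ∀ {i j : ℤ} {m x}, m ∈ N.gr i → x ∈ X.gr j → t m x ∈ T.gr (i + j)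
  t_d : ∀ {i : ℤ} (m x), m ∈ N.gr i → T.d (t m x) = t (N.d m) x + sgn i • t m (X.d x)
  span : ∀ y : T.carrier, y ∈ Submodule.span R {z : T.carrier | ∃ m x, z = t m x}
  univ : ∀ (Q : Type u) [AddCommGroup Q] [Module R Q] (h : N.carrier → X.carrier → Q),
    (∀ m m' x, h (m + m') x = h m x + h m' x) →
    (∀ m x x', h m (x + x') = h m x + h m x') →
    (∀ (r : R) m x, h (r • m) x = r • h m x) →
    (∀ (r : R) m x, h m (r • x) = r • h m x) →
    (∀ {i j : ℤ} (m x) (b : P.B.carrier), b ∈ P.B.gr i → x ∈ X.gr j →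
      h (N.smul m b) x = sgn (i * j) • h m (X.smul x b)) →
    ∃! H : T.carrier →ₗ[R] Q, ∀ m x, H (t m x) = h m x

/-- `D : B → X` is an `A`-derivation of degree `n` with values in the DG `B`-module `X`. -/
def IsDerB (P : EnvSetup R) (X : DGMod P.B) (n : ℤ) (D : P.B.carrier → X.carrier) : Prop :=
  (∀ b c, D (b + c) = D b + D c) ∧
  (∀ (r : R) b, D (r • b) = r • D b) ∧
  (∀ (b : P.B.carrier) (a : P.A.carrier),
    D (b * P.φ.toFun a) = X.smul (D b) (P.φ.toFun a)) ∧
  (∀ i : ℤ, ∀ b ∈ P.B.gr i, D b ∈ X.gr (i + n)) ∧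
  (∀ (i j : ℤ) (b c : P.B.carrier), b ∈ P.B.gr i → c ∈ P.B.gr j →
    D (b * c) = X.smul (D b) c + sgn (i * j) • X.smul (D c) b)

/-- `D` belongs to `Der_A(B,X)` for a DG `B`-module `X`. -/
def InSDerB (P : EnvSetup R) (X : DGMod P.B) (D : P.B.carrier → X.carrier) : Prop :=
  ∃ (s : Finset ℤ) (g : ℤ → P.B.carrier → X.carrier),
    (∀ n ∈ s, IsDerB P X n (g n)) ∧ ∀ b, D b = ∑ n ∈ s, g n b

/-- `ψ : N → N ⊗_B X` is a `D`-connection on `N` along the DG `B`-module `X`. -/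
def IsConnB {P : EnvSetup R} {N X : DGMod P.B} (τ : TensorBB P N X)
    (n : ℤ) (D : P.B.carrier → X.carrier) (ψ : N.carrier → τ.T.carrier) : Prop :=
  (∀ x y : N.carrier, ψ (x + y) = ψ x + ψ y) ∧
  (∀ (r : R) (x : N.carrier), ψ (r • x) = r • ψ x) ∧
  (∀ i : ℤ, ∀ x ∈ N.gr i, ψ x ∈ τ.T.gr (i + n)) ∧
  (∀ (i : ℤ) (x : N.carrier) (b : P.B.carrier), x ∈ N.gr i →
    ψ (N.smul x b) = τ.T.smul (ψ x) b + sgn (n * i) • τ.t x (D b))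

/-- A `Der_A(B,X)`-connection on `N` along a DG `B`-module `X` (equivalently, a DG
`B`-module splitting of `ν : Conn(N, N ⊗_B X) → Der_A(B,X)`). -/
def IsLConnB {P : EnvSetup R} {N X : DGMod P.B} (τ : TensorBB P N X)
    (Cn : (P.B.carrier → X.carrier) → N.carrier → τ.T.carrier) : Prop :=
  (∀ (n : ℤ) (D), IsDerB P X n D → IsConnB τ n D (Cn D)) ∧
  (∀ D D', InSDerB P X D → InSDerB P X D' →
    ∀ x, Cn (fun b => D b + D' b) x = Cn D x + Cn D' x) ∧
  (∀ (r : R) (D), InSDerB P X D → ∀ x, Cn (fun b => r • D b) x = r • Cn D x) ∧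
  (∀ (k n : ℤ) (b : P.B.carrier) (D), b ∈ P.B.gr k → IsDerB P X n D →
    ∀ x, Cn (fun c => X.lsmul b (D c)) x = τ.T.lsmul b (Cn D x)) ∧
  (∀ (n : ℤ) (D), IsDerB P X n D →
    ∀ x, Cn (fun b => X.d (D b) - sgn n • D (P.B.d b)) x
      = τ.T.d (Cn D x) - sgn n • Cn D (N.d x))

/-- `D : B → B` is an `A`-derivation of `B` of degree `n` (an element of
`Der_A(B) = Der_A(B,B)`). -/
def IsDerSelf (P : EnvSetup R) (n : ℤ) (D : P.B.carrier → P.B.carrier) : Prop :=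
  (∀ b c, D (b + c) = D b + D c) ∧
  (∀ (r : R) b, D (r • b) = r • D b) ∧
  (∀ (b : P.B.carrier) (a : P.A.carrier), D (b * P.φ.toFun a) = D b * P.φ.toFun a) ∧
  (∀ i : ℤ, ∀ b ∈ P.B.gr i, D b ∈ P.B.gr (i + n)) ∧
  (∀ (i j : ℤ) (b c : P.B.carrier), b ∈ P.B.gr i → c ∈ P.B.gr j →
    D (b * c) = D b * c + sgn (i * j) • (D c * b))

/-- `D` belongs to `Der_A(B) = ⊕_{n ∈ ℤ} Der_A(B)_n`. -/
def InSDerSelf (P : EnvSetup R) (D : P.B.carrier → P.B.carrier) : Prop :=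
  ∃ (s : Finset ℤ) (g : ℤ → P.B.carrier → P.B.carrier),
    (∀ n ∈ s, IsDerSelf P n (g n)) ∧ ∀ b, D b = ∑ n ∈ s, g n b

/-- `ψ : N → N` is a `D`-connection on `N` along `B` (identifying `N ⊗_B B ≅ N`):
`ψ(xb) = ψ(x)b + (-1)^{|D||x|} x D(b)`. -/
def IsConnSelf (P : EnvSetup R) (N : DGMod P.B) (n : ℤ)
    (D : P.B.carrier → P.B.carrier) (ψ : N.carrier → N.carrier) : Prop :=
  (∀ x y : N.carrier, ψ (x + y) = ψ x + ψ y) ∧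
  (∀ (r : R) (x : N.carrier), ψ (r • x) = r • ψ x) ∧
  (∀ i : ℤ, ∀ x ∈ N.gr i, ψ x ∈ N.gr (i + n)) ∧
  (∀ (i : ℤ) (x : N.carrier) (b : P.B.carrier), x ∈ N.gr i →
    ψ (N.smul x b) = N.smul (ψ x) b + sgn (n * i) • N.smul x (D b))

/-- A `Der_A(B)`-connection on `N` (along `B`). -/
def IsLConnSelf (P : EnvSetup R) (N : DGMod P.B)
    (Cn : (P.B.carrier → P.B.carrier) → N.carrier → N.carrier) : Prop :=
  (∀ (n : ℤ) (D), IsDerSelf P n D → IsConnSelf P N n D (Cn D)) ∧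
  (∀ D D', InSDerSelf P D → InSDerSelf P D' →
    ∀ x, Cn (fun b => D b + D' b) x = Cn D x + Cn D' x) ∧
  (∀ (r : R) (D), InSDerSelf P D → ∀ x, Cn (fun b => r • D b) x = r • Cn D x) ∧
  (∀ (k n : ℤ) (b : P.B.carrier) (D), b ∈ P.B.gr k → IsDerSelf P n D →
    ∀ x, Cn (fun c => b * D c) x = N.lsmul b (Cn D x)) ∧
  (∀ (n : ℤ) (D), IsDerSelf P n D →
    ∀ x, Cn (fun b => P.B.d (D b) - sgn n • D (P.B.d b)) x
      = N.d (Cn D x) - sgn n • Cn D (N.d x))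

/-- The trivial `D`-connection `φ(D)` on a graded-free DG `B`-module `N` with
homogeneous basis `e` (of degrees `deg`), along a DG `Bᵉ`-module `X`:
`φ(D)(Σ e_λ b_λ) = Σ (-1)^{|D||e_λ|} e_λ ⊗ D(b_λ)`. -/
noncomputable def trivConn {P : EnvSetup R} {N : DGMod P.B} {X : DGMod P.E}
    (τ : TensorBX P N X) {ι : Type u} (e : ι → N.carrier) (deg : ι → ℤ)
    (hb : Function.Bijective fun c : ι →₀ P.B.carrier => c.sum fun l b => N.smul (e l) b)
    (n : ℤ) (D : P.B.carrier → X.carrier) : N.carrier → τ.T.carrier :=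
  fun x => ((Equiv.ofBijective _ hb).symm x).sum fun l b => sgn (n * deg l) • τ.t (e l) (D b)

/-- The trivial `D`-connection on a graded-free DG `B`-module `N` along `B`
(identifying `N ⊗_B B ≅ N`). -/
noncomputable def trivConnSelf {P : EnvSetup R} (N : DGMod P.B) {ι : Type u}
    (e : ι → N.carrier) (deg : ι → ℤ)
    (hb : Function.Bijective fun c : ι →₀ P.B.carrier => c.sum fun l b => N.smul (e l) b)
    (n : ℤ) (D : P.B.carrier → P.B.carrier) : N.carrier → N.carrier :=
  fun x => ((Equiv.ofBijective _ hb).symm x).sum fun l b => sgn (n * deg l) • N.smul (e l) (D b)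

/-- The Atiyah homomorphism `α : N → N ⊗_B J(-1)` of a semifree DG `B`-module `N` with
semifree basis `e` and structure coefficients `cf` (`∂(e_λ) = Σ_μ e_μ (cf λ)_μ`):
the `B`-linear map with `α(e_λ) = Σ_μ e_μ ⊗ δ((cf λ)_μ)`. -/
noncomputable def atiyah {P : EnvSetup R} {N : DGMod P.B} (τ : TensorBX P N P.J)
    {ι : Type u} (e : ι → N.carrier)
    (hb : Function.Bijective fun c : ι →₀ P.B.carrier => c.sum fun l b => N.smul (e l) b)
    (cf : ι → ι →₀ P.B.carrier) : N.carrier → τ.T.carrier :=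
  fun x => ((Equiv.ofBijective _ hb).symm x).sum fun l b =>
    τ.T.smul ((cf l).sum fun m b' => τ.t (e m) (P.δ b')) b

/-- The classical Atiyah map `ᾱ : N → N ⊗_B Ω(-1)` (or more generally the analogue of the
Atiyah homomorphism along a DG `B`-module `X` with respect to a derivation-like map
`D0 : B → X`): the `B`-linear map with `ᾱ(e_λ) = Σ_μ e_μ ⊗ D0((cf λ)_μ)`. -/
noncomputable def atiyahB {P : EnvSetup R} {N X : DGMod P.B} (τ : TensorBB P N X)
    {ι : Type u} (e : ι → N.carrier)
    (hb : Function.Bijective fun c : ι →₀ P.B.carrier => c.sum fun l b => N.smul (e l) b)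
    (cf : ι → ι →₀ P.B.carrier) (D0 : P.B.carrier → X.carrier) : N.carrier → τ.T.carrier :=
  fun x => ((Equiv.ofBijective _ hb).symm x).sum fun l b =>
    τ.T.smul ((cf l).sum fun m b' => τ.t (e m) (D0 b')) b

/-- The Kodaira–Spencer homomorphism `κ(D) = [∂^N, φ(D)] - φ([d^B, D])` on a graded-free
DG `B`-module `N` with respect to the homogeneous basis `e`. -/
noncomputable def kappa {P : EnvSetup R} (N : DGMod P.B) {ι : Type u}
    (e : ι → N.carrier) (deg : ι → ℤ)
    (hb : Function.Bijective fun c : ι →₀ P.B.carrier => c.sum fun l b => N.smul (e l) b)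
    (n : ℤ) (D : P.B.carrier → P.B.carrier) : N.carrier → N.carrier :=
  fun x =>
    (N.d (trivConnSelf N e deg hb n D x) - sgn n • trivConnSelf N e deg hb n D (N.d x))
      - trivConnSelf N e deg hb (n - 1) (fun b => P.B.d (D b) - sgn n • D (P.B.d b)) x

/-- The setup of the paper enriched with the differential module
`Ω = Ω_A(B) = J/J²` of `B` over `A`, a DG `B`-module with the natural
projection `pOm : J → Ω` whose kernel is `J²`. -/
structure OmegaSetup (R : Type u) [CommRing R] : Type (u + 1) where
  env : EnvSetup R
  Ω : DGMod env.B
  pOm : env.J.carrier → Ω.carrier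
  pOm_add : ∀ x y, pOm (x + y) = pOm x + pOm y
  pOm_rsmul : ∀ (r : R) x, pOm (r • x) = r • pOm x
  pOm_surj : Function.Surjective pOm
  pOm_gr : ∀ {i : ℤ} {x}, x ∈ env.J.gr i → pOm x ∈ Ω.gr i
  pOm_d : ∀ x, pOm (env.J.d x) = Ω.d (pOm x)
  pOm_smul : ∀ x ee, pOm (env.J.smul x ee) = Ω.smul (pOm x) (env.mulB.toFun ee)
  pOm_ker : ∀ x, pOm x = 0 ↔
    env.ιJ x ∈ Submodule.span R
      {y : env.E.carrier | ∃ u v : env.J.carrier, y = env.ιJ u * env.ιJ v}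

/-- The universal derivation `δ̄ : B → Ω = J/J²` induced by `δ`. -/
def OmegaSetup.δbar (Q : OmegaSetup R) : Q.env.B.carrier → Q.Ω.carrier :=
  fun b => Q.pOm (Q.env.δ b)

end DG


namespace DG

universe u

section VarpiHelpers

variable {R : Type u} [CommRing R]

/-! ### sgn lemmas -/

lemma sgn_mul_sgn (a : ℤ) : sgn a * sgn a = 1 := by
  unfold sgn
  rw [← Units.val_mul, Int.units_mul_self]
  rfl

lemma sgn_sgn_smul {M : Type*} [AddCommGroup M] (a : ℤ) (x : M) :
    sgn a • sgn a • x = x := by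
  rw [smul_smul, sgn_mul_sgn, one_smul]

lemma sgn_zero : sgn 0 = 1 := by unfold sgn; rw [zpow_zero]; rfl

lemma sgn_comm (a b : ℤ) : sgn (a * b) = sgn (b * a) := by rw [mul_comm]

/-- A ℤ-linear consequence of additivity. -/
lemma add_map_zsmul {M N : Type*} [AddCommGroup M] [AddCommGroup N]
    (f : M → N) (hf : ∀ x y, f (x + y) = f x + f y) (k : ℤ) (x : M) :
    f (k • x) = k • f x :=
  map_zsmul (AddMonoidHom.mk' f hf) k x

lemma add_map_zero {M N : Type*} [AddCommGroup M] [AddCommGroup N]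
    (f : M → N) (hf : ∀ x y, f (x + y) = f x + f y) : f 0 = 0 :=
  map_zero (AddMonoidHom.mk' f hf)

lemma add_map_sub {M N : Type*} [AddCommGroup M] [AddCommGroup N]
    (f : M → N) (hf : ∀ x y, f (x + y) = f x + f y) (x y : M) :
    f (x - y) = f x - f y :=
  map_sub (AddMonoidHom.mk' f hf) x y

/-! ### DGHom lemmas -/

lemma DGHom.map_zero' {S T : DGAlg R} (f : DGHom S T) : f.toFun 0 = 0 :=
  f.toRingHom.map_zero

lemma DGHom.map_sub' {S T : DGAlg R} (f : DGHom S T) (x y : S.carrier) :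
    f.toFun (x - y) = f.toFun x - f.toFun y :=
  f.toRingHom.map_sub x y

lemma DGHom.map_rsmul {S T : DGAlg R} (f : DGHom S T) (r : R) (x : S.carrier) :
    f.toFun (r • x) = r • f.toFun x := by
  rw [Algebra.smul_def, f.map_mul, f.map_algebraMap, ← Algebra.smul_def]

/-! ### DGMod lemmas -/

lemma DGMod.smul_zero' {S : DGAlg R} (M : DGMod S) (x : M.carrier) :
    M.smul x 0 = 0 := by
  have h := M.smul_add x 0 0
  rw [add_zero] at h
  exact left_eq_add.mp h

lemma DGMod.zero_smul' {S : DGAlg R} (M : DGMod S) (e : S.carrier) :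
    M.smul 0 e = 0 := by
  have h := M.add_smul 0 0 e
  rw [add_zero] at h
  exact left_eq_add.mp h

lemma DGMod.smul_zsmul_left {S : DGAlg R} (M : DGMod S) (k : ℤ) (x : M.carrier)
    (e : S.carrier) : M.smul (k • x) e = k • M.smul x e :=
  add_map_zsmul (fun y => M.smul y e) (fun a b => M.add_smul a b e) k x

lemma DGMod.smul_zsmul_right {S : DGAlg R} (M : DGMod S) (k : ℤ) (x : M.carrier)
    (e : S.carrier) : M.smul x (k • e) = k • M.smul x e :=
  add_map_zsmul (fun y => M.smul x y) (M.smul_add x) k e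

lemma DGMod.smul_rsmul_right {S : DGAlg R} (M : DGMod S) (r : R) (x : M.carrier)
    (e : S.carrier) : M.smul x (r • e) = r • M.smul x e := by
  rw [Algebra.smul_def, M.smul_mul, M.smul_algebraMap, M.smul_rsmul]

lemma DGMod.smul_sub_right {S : DGAlg R} (M : DGMod S) (x : M.carrier)
    (e e' : S.carrier) : M.smul x (e - e') = M.smul x e - M.smul x e' :=
  add_map_sub (fun y => M.smul x y) (M.smul_add x) e e'

lemma DGMod.sub_smul' {S : DGAlg R} (M : DGMod S) (x y : M.carrier)
    (e : S.carrier) : M.smul (x - y) e = M.smul x e - M.smul y e :=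
  add_map_sub (fun z => M.smul z e) (fun a b => M.add_smul a b e) x y

/-! ### EnvSetup lemmas -/

variable (P : EnvSetup R)

lemma EnvSetup.ιJ_zero : P.ιJ 0 = 0 := add_map_zero P.ιJ P.ιJ_add

lemma EnvSetup.ιJ_zsmul (k : ℤ) (x : P.J.carrier) : P.ιJ (k • x) = k • P.ιJ x :=
  add_map_zsmul P.ιJ P.ιJ_add k x

lemma EnvSetup.δ_add (b c : P.B.carrier) : P.δ (b + c) = P.δ b + P.δ c := by
  apply P.ιJ_inj
  rw [P.ιJ_add, P.ιJ_δ, P.ιJ_δ, P.ιJ_δ, P.inl.map_add, P.inr.map_add]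
  abel

lemma EnvSetup.δ_rsmul (r : R) (b : P.B.carrier) : P.δ (r • b) = r • P.δ b := by
  apply P.ιJ_inj
  rw [P.ιJ_rsmul, P.ιJ_δ, P.ιJ_δ, P.inl.map_rsmul, P.inr.map_rsmul, smul_sub]

lemma EnvSetup.δ_zero : P.δ 0 = 0 := by
  apply P.ιJ_inj
  rw [P.ιJ_δ, P.inl.map_zero', P.inr.map_zero', sub_self, P.ιJ_zero]

lemma EnvSetup.δ_one : P.δ 1 = 0 := by
  apply P.ιJ_inj
  rw [P.ιJ_δ, P.inl.map_one, P.inr.map_one, sub_self, P.ιJ_zero]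

lemma EnvSetup.δ_mem {i : ℤ} {b : P.B.carrier} (hb : b ∈ P.B.gr i) :
    P.δ b ∈ P.J.gr i := by
  rw [P.ιJ_gr, P.ιJ_δ]
  exact sub_mem (P.inl.map_gr hb) (P.inr.map_gr hb)

lemma EnvSetup.δ_phi (b : P.B.carrier) (a : P.A.carrier) :
    P.δ (b * P.φ.toFun a) = P.J.smul (P.δ b) (P.inr.toFun (P.φ.toFun a)) := by
  apply P.ιJ_inj
  rw [P.ιJ_smul, P.ιJ_δ, P.ιJ_δ, P.inl.map_mul, P.inr.map_mul, P.inl_inr_phi, sub_mul]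

lemma EnvSetup.δ_d (b : P.B.carrier) : P.δ (P.B.d b) = P.J.d (P.δ b) := by
  apply P.ιJ_inj
  rw [P.ιJ_d, P.ιJ_δ, P.ιJ_δ, map_sub, P.inl.map_d, P.inr.map_d]

lemma EnvSetup.δ_mul {i j : ℤ} {b c : P.B.carrier} (hb : b ∈ P.B.gr i)
    (hc : c ∈ P.B.gr j) :
    P.δ (b * c) = P.J.smul (P.δ b) (P.inr.toFun c)
      + sgn (i * j) • P.J.smul (P.δ c) (P.inl.toFun b) := by
  apply P.ιJ_inj
  rw [P.ιJ_add, P.ιJ_zsmul, P.ιJ_smul, P.ιJ_smul, P.ιJ_δ, P.ιJ_δ, P.ιJ_δ]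
  have h1 : P.inl.toFun (b * c) = sgn (i * j) • (P.inl.toFun c * P.inl.toFun b) := by
    rw [P.B.gcomm hb hc, add_map_zsmul P.inl.toFun P.inl.map_add, P.inl.map_mul]
  have h2 : P.inr.toFun c * P.inl.toFun b
      = sgn (j * i) • (P.inl.toFun b * P.inr.toFun c) :=
    P.E.gcomm (P.inr.map_gr hc) (P.inl.map_gr hb)
  rw [sub_mul, sub_mul, smul_sub, h1, h2, P.inr.map_mul, smul_smul, mul_comm j i,
    sgn_mul_sgn, one_smul]
  abel

/-! ### homogeneous induction and projections -/

lemma DGAlg.homog_ind (S : DGAlg R) (p : S.carrier → Prop) (h0 : p 0)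
    (hadd : ∀ x y, p x → p y → p (x + y))
    (hhom : ∀ (i : ℤ), ∀ x ∈ S.gr i, p x) : ∀ b, p b := by
  letI := S.internal.chooseDecomposition
  exact DirectSum.Decomposition.inductionOn S.gr h0
    (fun {i} m => hhom i m m.2) (fun m m' hm hm' => hadd m m' hm hm')

/-- Projection onto the degree-`k` component of an internally graded module. -/
noncomputable def projOf {M : Type u} [AddCommGroup M] [Module R M]
    (gr : ℤ → Submodule R M) (hi : DirectSum.IsInternal gr) (k : ℤ) (x : M) : M :=
  letI := hi.chooseDecomposition
  (DirectSum.decompose gr x k : M)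

variable {M : Type u} [AddCommGroup M] [Module R M]
  (gr : ℤ → Submodule R M) (hi : DirectSum.IsInternal gr)

lemma projOf_mem (k : ℤ) (x : M) : projOf gr hi k x ∈ gr k := by
  letI := hi.chooseDecomposition
  exact (DirectSum.decompose gr x k).2

lemma projOf_of_mem_same {k : ℤ} {x : M} (hx : x ∈ gr k) : projOf gr hi k x = x := by
  letI := hi.chooseDecomposition
  exact DirectSum.decompose_of_mem_same gr hx

lemma projOf_of_mem_ne {i k : ℤ} {x : M} (hx : x ∈ gr i) (hik : i ≠ k) :
    projOf gr hi k x = 0 := by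
  letI := hi.chooseDecomposition
  exact DirectSum.decompose_of_mem_ne gr hx hik

lemma projOf_add (k : ℤ) (x y : M) :
    projOf gr hi k (x + y) = projOf gr hi k x + projOf gr hi k y := by
  letI := hi.chooseDecomposition
  show ((DirectSum.decompose gr (x + y) k : gr k) : M) = _
  rw [DirectSum.decompose_add, DirectSum.add_apply, Submodule.coe_add]
  rfl

lemma projOf_rsmul (k : ℤ) (r : R) (x : M) :
    projOf gr hi k (r • x) = r • projOf gr hi k x := by
  letI := hi.chooseDecomposition
  show ((DirectSum.decompose gr (r • x) k : gr k) : M) = _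
  rw [DirectSum.decompose_smul, DirectSum.smul_apply, Submodule.coe_smul]
  rfl

/-! ### derivation lemmas -/

lemma IsDer.map_zero' {X : DGMod P.E} {n : ℤ} {D : P.B.carrier → X.carrier}
    (hD : IsDer P X n D) : D 0 = 0 := add_map_zero D hD.1

lemma IsDer.map_one' {X : DGMod P.E} {n : ℤ} {D : P.B.carrier → X.carrier}
    (hD : IsDer P X n D) : D 1 = 0 := by
  have h := hD.2.2.2.2 0 0 1 1 P.B.one_mem P.B.one_mem
  rw [mul_one, P.inr.map_one, P.inl.map_one, X.smul_one,
    show (0 * 0 : ℤ) = 0 from rfl, sgn_zero, one_smul] at h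
  exact left_eq_add.mp h

lemma der_swap {X : DGMod P.E} {n : ℤ} {D : P.B.carrier → X.carrier}
    (hD : IsDer P X n D) {i k : ℤ} {b c : P.B.carrier}
    (hb : b ∈ P.B.gr i) (hc : c ∈ P.B.gr k) :
    X.smul (D b) (P.ιJ (P.δ c)) = sgn (i * k) • X.smul (D c) (P.ιJ (P.δ b)) := by
  have h1 := hD.2.2.2.2 i k b c hb hc
  have h3 := hD.2.2.2.2 k i c b hc hb
  have h2 : D (b * c) = sgn (i * k) • D (c * b) := by
    rw [P.B.gcomm hb hc, add_map_zsmul D hD.1]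
  rw [h1, h3, smul_add, smul_smul, mul_comm k i, sgn_mul_sgn, one_smul] at h2
  rw [P.ιJ_δ, P.ιJ_δ, X.smul_sub_right, X.smul_sub_right, smul_sub,
    sub_eq_sub_iff_add_eq_add]
  calc X.smul (D b) (P.inl.toFun c) + sgn (i * k) • X.smul (D c) (P.inr.toFun b)
      = sgn (i * k) • X.smul (D c) (P.inr.toFun b) + X.smul (D b) (P.inl.toFun c) :=
        add_comm _ _
    _ = X.smul (D b) (P.inr.toFun c) + sgn (i * k) • X.smul (D c) (P.inl.toFun b) :=
        h2.symm
    _ = sgn (i * k) • X.smul (D c) (P.inl.toFun b) + X.smul (D b) (P.inr.toFun c) :=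
        add_comm _ _

/-! ### the section σ of ιJ and the spanning of J -/

/-- Homogeneous generators `δ(b)·(1 ⊗ c)` of `J`. -/
def genSet : Set P.J.carrier :=
  {y | ∃ (i j : ℤ) (b c : P.B.carrier), b ∈ P.B.gr i ∧ c ∈ P.B.gr j ∧
    y = P.J.smul (P.δ b) (P.inr.toFun c)}

lemma mulB_vanish (e : P.E.carrier) :
    P.mulB.toFun (e - P.inr.toFun (P.mulB.toFun e)) = 0 := by
  rw [P.mulB.map_sub', P.mulB_inr, sub_self]

/-- A set-theoretic section of `ιJ` on all of `E`, `e ↦ e - 1 ⊗ π(e)`. -/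
noncomputable def sigmaJ (e : P.E.carrier) : P.J.carrier :=
  Classical.choose ((P.ιJ_range (e - P.inr.toFun (P.mulB.toFun e))).mpr (mulB_vanish P e))

lemma sigmaJ_spec (e : P.E.carrier) :
    P.ιJ (sigmaJ P e) = e - P.inr.toFun (P.mulB.toFun e) :=
  Classical.choose_spec ((P.ιJ_range _).mpr (mulB_vanish P e))

lemma sigmaJ_add (e e' : P.E.carrier) :
    sigmaJ P (e + e') = sigmaJ P e + sigmaJ P e' := by
  apply P.ιJ_inj
  rw [P.ιJ_add, sigmaJ_spec, sigmaJ_spec, sigmaJ_spec, P.mulB.map_add, P.inr.map_add]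
  abel

lemma sigmaJ_rsmul (r : R) (e : P.E.carrier) :
    sigmaJ P (r • e) = r • sigmaJ P e := by
  apply P.ιJ_inj
  rw [P.ιJ_rsmul, sigmaJ_spec, sigmaJ_spec, P.mulB.map_rsmul, P.inr.map_rsmul, smul_sub]

lemma sigmaJ_ιJ (x : P.J.carrier) : sigmaJ P (P.ιJ x) = x := by
  apply P.ιJ_inj
  have h0 : P.mulB.toFun (P.ιJ x) = 0 := (P.ιJ_range (P.ιJ x)).mp ⟨x, rfl⟩
  rw [sigmaJ_spec, h0, P.inr.map_zero', sub_zero]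

lemma sigmaJ_gen (b c : P.B.carrier) :
    sigmaJ P (P.inl.toFun b * P.inr.toFun c) = P.J.smul (P.δ b) (P.inr.toFun c) := by
  apply P.ιJ_inj
  rw [sigmaJ_spec, P.ιJ_smul, P.ιJ_δ, P.mulB.map_mul, P.mulB_inl, P.mulB_inr,
    P.inr.map_mul, sub_mul]

lemma gen_mem_span (b c : P.B.carrier) :
    P.J.smul (P.δ b) (P.inr.toFun c) ∈ Submodule.span R (genSet P) := by
  induction b using P.B.homog_ind with
  | h0 =>
    rw [P.δ_zero, P.J.zero_smul']
    exact Submodule.zero_mem _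
  | hadd x y hx hy =>
    rw [P.δ_add, P.J.add_smul]
    exact Submodule.add_mem _ hx hy
  | hhom i b hb =>
    induction c using P.B.homog_ind with
    | h0 =>
      rw [P.inr.map_zero', P.J.smul_zero']
      exact Submodule.zero_mem _
    | hadd x y hx hy =>
      rw [P.inr.map_add, P.J.smul_add]
      exact Submodule.add_mem _ hx hy
    | hhom j c hc =>
      exact Submodule.subset_span ⟨i, j, b, c, hb, hc, rfl⟩

/-- Every element of `J` lies in the span of the homogeneous generators
`δ(b)·(1 ⊗ c)`. -/
lemma mem_span_gen (x : P.J.carrier) : x ∈ Submodule.span R (genSet P) := by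
  have hx : x = sigmaJ P (P.ιJ x) := (sigmaJ_ιJ P x).symm
  rw [hx]
  have h := P.span (P.ιJ x)
  clear hx
  generalize P.ιJ x = e at h
  induction h using Submodule.span_induction with
  | mem y hy =>
    obtain ⟨b, c, rfl⟩ := hy
    rw [sigmaJ_gen]
    exact gen_mem_span P b c
  | zero =>
    have : sigmaJ P 0 = 0 := by
      apply P.ιJ_inj
      rw [sigmaJ_spec, P.mulB.map_zero', P.inr.map_zero', sub_zero, P.ιJ_zero]
    rw [this]; exact Submodule.zero_mem _
  | add y z _ _ hy hz =>
    rw [sigmaJ_add]; exact Submodule.add_mem _ hy hz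
  | smul r y _ hy =>
    rw [sigmaJ_rsmul]; exact Submodule.smul_mem _ r hy

/-! ### consequences of membership in Hom_{Bᵉ}(J,X) -/

variable {X : DGMod P.E}

lemma InSHom_add {f : P.J.carrier → X.carrier} (hf : InSHom P.J X f)
    (x y : P.J.carrier) : f (x + y) = f x + f y := by
  obtain ⟨s, g, hg, hsum⟩ := hf
  rw [hsum, hsum, hsum, ← Finset.sum_add_distrib]
  exact Finset.sum_congr rfl fun n hn => (hg n hn).1 x y

lemma InSHom_rsmul {f : P.J.carrier → X.carrier} (hf : InSHom P.J X f)
    (r : R) (x : P.J.carrier) : f (r • x) = r • f x := by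
  obtain ⟨s, g, hg, hsum⟩ := hf
  rw [hsum, hsum, Finset.smul_sum]
  exact Finset.sum_congr rfl fun n hn => (hg n hn).2.1 r x

lemma InSHom_esmul {f : P.J.carrier → X.carrier} (hf : InSHom P.J X f)
    (x : P.J.carrier) (e : P.E.carrier) : f (P.J.smul x e) = X.smul (f x) e := by
  obtain ⟨s, g, hg, hsum⟩ := hf
  rw [hsum, hsum]
  have hs : X.smul (∑ n ∈ s, g n x) e = ∑ n ∈ s, X.smul (g n x) e :=
    map_sum (AddMonoidHom.mk' (fun v : X.carrier => X.smul v e)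
      (fun a b => X.add_smul a b e)) (fun n => g n x) s
  rw [hs]
  exact Finset.sum_congr rfl fun n hn => (hg n hn).2.2.1 x e

lemma InSHom_zero {f : P.J.carrier → X.carrier} (hf : InSHom P.J X f) : f 0 = 0 :=
  add_map_zero f (InSHom_add P hf)

/-- Injectivity of ϖ. -/
lemma InSHom_ext {f g : P.J.carrier → X.carrier} (hf : InSHom P.J X f)
    (hg : InSHom P.J X g) (h : ∀ b, f (P.δ b) = g (P.δ b)) : f = g := by
  funext x
  induction mem_span_gen P x using Submodule.span_induction with
  | mem y hy =>
    obtain ⟨i, j, b, c, hb, hc, rfl⟩ := hy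
    rw [InSHom_esmul P hf, InSHom_esmul P hg, h]
  | zero => rw [InSHom_zero P hf, InSHom_zero P hg]
  | add y z _ _ hy hz => rw [InSHom_add P hf, InSHom_add P hg, hy, hz]
  | smul r y _ hy => rw [InSHom_rsmul P hf, InSHom_rsmul P hg, hy]

/-- Continuity of ϖ⁻¹. -/
lemma vanish_low {f : P.J.carrier → X.carrier} (hf : InSHom P.J X f) (n : ℤ)
    (h : ∀ k : ℤ, k ≤ n → ∀ b ∈ P.B.gr k, f (P.δ b) = 0) :
    ∀ k : ℤ, k ≤ n → ∀ x ∈ P.J.gr k, f x = 0 := by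
  intro k hk x hx
  have key : ∀ y : P.J.carrier, f (projOf P.J.gr P.J.internal k y) = 0 := by
    intro y
    induction mem_span_gen P y using Submodule.span_induction with
    | mem z hz =>
      obtain ⟨i, j, b, c, hb, hc, rfl⟩ := hz
      have hzgr : P.J.smul (P.δ b) (P.inr.toFun c) ∈ P.J.gr (i + j) :=
        P.J.smul_mem (P.δ_mem hb) (P.inr.map_gr hc)
      by_cases hij : i + j = k
      · rw [projOf_of_mem_same _ _ (hij ▸ hzgr)]
        by_cases hj : 0 ≤ j
        · have hb0 : f (P.δ b) = 0 := h i (by omega) b hb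
          rw [InSHom_esmul P hf, hb0, X.zero_smul']
        · have hc0 : c = 0 := by
            have := P.B.nonneg j (by omega) ▸ hc
            simpa using this
          rw [hc0, P.inr.map_zero', P.J.smul_zero', InSHom_zero P hf]
      · rw [projOf_of_mem_ne _ _ hzgr hij, InSHom_zero P hf]
    | zero =>
      rw [projOf_of_mem_same _ _ (Submodule.zero_mem _), InSHom_zero P hf]
    | add y z _ _ hy hz =>
      rw [projOf_add, InSHom_add P hf, hy, hz, add_zero]
    | smul r y _ hy =>
      rw [projOf_rsmul, InSHom_rsmul P hf, hy, smul_zero]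
  have := key x
  rwa [projOf_of_mem_same _ _ hx] at this

/-! ### Surjectivity of ϖ: constructing `f` from a derivation `D` -/

lemma surj_single {n : ℤ} {D : P.B.carrier → X.carrier} (hD : IsDer P X n D) :
    ∃ f : P.J.carrier → X.carrier, IsGLin P.J X n f ∧ ∀ b, f (P.δ b) = D b := by
  classical
  obtain ⟨Hl, hgen, -⟩ := P.univ X.carrier
    (fun b c => X.smul (D b) (P.inr.toFun c))
    (fun b₁ b₂ b' => by rw [hD.1, X.add_smul])
    (fun b b₁ b₂ => by rw [P.inr.map_add, X.smul_add])
    (fun r b b' => by rw [hD.2.1, X.smul_rsmul])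
    (fun r b b' => by rw [P.inr.map_rsmul, X.smul_rsmul_right])
    (fun a b b' => by rw [hD.2.2.1 b a, ← X.smul_mul, ← P.inr.map_mul])
  -- `Hl` is right-linear for multiplication by `1 ⊗ c`, on all of `E`
  have ha : ∀ (y : P.E.carrier) (c : P.B.carrier),
      Hl (y * P.inr.toFun c) = X.smul (Hl y) (P.inr.toFun c) := by
    intro y c
    induction P.span y using Submodule.span_induction with
    | mem z hz =>
      obtain ⟨b, b', rfl⟩ := hz
      rw [mul_assoc, ← P.inr.map_mul, hgen, hgen, P.inr.map_mul, X.smul_mul]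
    | zero => rw [zero_mul, map_zero, X.zero_smul']
    | add y z _ _ hy hz => rw [add_mul, map_add, map_add, hy, hz, X.add_smul]
    | smul r y _ hy => rw [smul_mul_assoc, map_smul, map_smul, hy, X.smul_rsmul]
  -- `Hl` is right-linear for multiplication by `u ⊗ 1`, on `J`
  have hbl : ∀ (x : P.J.carrier) (u : P.B.carrier),
      Hl (P.ιJ x * P.inl.toFun u) = X.smul (Hl (P.ιJ x)) (P.inl.toFun u) := by
    intro x u
    induction mem_span_gen P x using Submodule.span_induction with
    | mem z hz =>
      obtain ⟨i, j, b, c, hb, hc, rfl⟩ := hz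
      rw [P.ιJ_smul, P.ιJ_δ]
      induction u using P.B.homog_ind with
      | h0 => rw [P.inl.map_zero', mul_zero, map_zero, X.smul_zero']
      | hadd u v hu hv => rw [P.inl.map_add, mul_add, map_add, hu, hv, X.smul_add]
      | hhom p u hu =>
        -- the core sign computation
        have hybase : Hl ((P.inl.toFun b - P.inr.toFun b) * P.inr.toFun c)
            = X.smul (D b) (P.inr.toFun c) := by
          rw [sub_mul, ← P.inr.map_mul,
            show P.inr.toFun (b * c) = P.inl.toFun 1 * P.inr.toFun (b * c) by
              rw [P.inl.map_one, one_mul],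
            map_sub, hgen, hgen, hD.map_one' P, X.zero_smul', sub_zero]
        have harg : (P.inl.toFun b - P.inr.toFun b) * P.inr.toFun c * P.inl.toFun u
            = sgn (j * p) • (P.inl.toFun (b * u) * P.inr.toFun c
              - sgn (i * p) • (P.inl.toFun u * P.inr.toFun (b * c))) := by
          calc (P.inl.toFun b - P.inr.toFun b) * P.inr.toFun c * P.inl.toFun u
              = (P.inl.toFun b - P.inr.toFun b) * (P.inr.toFun c * P.inl.toFun u) := by
                rw [mul_assoc]
            _ = (P.inl.toFun b - P.inr.toFun b)
                * (sgn (j * p) • (P.inl.toFun u * P.inr.toFun c)) := by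
                rw [P.E.gcomm (P.inr.map_gr hc) (P.inl.map_gr hu)]
            _ = sgn (j * p) • ((P.inl.toFun b - P.inr.toFun b)
                * (P.inl.toFun u * P.inr.toFun c)) := mul_smul_comm _ _ _
            _ = sgn (j * p) • (P.inl.toFun b * (P.inl.toFun u * P.inr.toFun c)
                - P.inr.toFun b * (P.inl.toFun u * P.inr.toFun c)) := by rw [sub_mul]
            _ = sgn (j * p) • (P.inl.toFun (b * u) * P.inr.toFun c
                - sgn (i * p) • (P.inl.toFun u * P.inr.toFun (b * c))) := by
                rw [← mul_assoc, ← P.inl.map_mul, ← mul_assoc,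
                  P.E.gcomm (P.inr.map_gr hb) (P.inl.map_gr hu), smul_mul_assoc,
                  mul_assoc, ← P.inr.map_mul]
        rw [hybase, harg, map_zsmul, map_sub, map_zsmul, hgen, hgen]
        have hswap := der_swap P hD hb hu
        rw [P.ιJ_δ, P.ιJ_δ] at hswap
        rw [hD.2.2.2.2 i p b u hb hu, X.add_smul, X.smul_zsmul_left]
        have hfst : X.smul (X.smul (D b) (P.inr.toFun u)) (P.inr.toFun c)
            = X.smul (D b) (P.inr.toFun (u * c)) := by
          rw [← X.smul_mul, ← P.inr.map_mul]
        have hmid : sgn (i * p) • X.smul (X.smul (D u) (P.inl.toFun b)) (P.inr.toFun c)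
            - sgn (i * p) • X.smul (D u) (P.inr.toFun (b * c))
            = X.smul (D b) (P.inl.toFun u * P.inr.toFun c)
              - X.smul (D b) (P.inr.toFun (u * c)) := by
          rw [P.inr.map_mul, X.smul_mul (D u) (P.inr.toFun b), ← smul_sub,
            ← X.sub_smul', ← X.smul_sub_right, ← X.smul_zsmul_left, ← hswap,
            ← X.smul_mul, sub_mul, ← P.inr.map_mul, X.smul_sub_right]
        have hrhs : X.smul (X.smul (D b) (P.inr.toFun c)) (P.inl.toFun u)
            = sgn (j * p) • X.smul (D b) (P.inl.toFun u * P.inr.toFun c) := by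
          rw [← X.smul_mul, P.E.gcomm (P.inr.map_gr hc) (P.inl.map_gr hu),
            X.smul_zsmul_right]
        rw [hrhs, hfst]
        congr 1
        rw [add_sub_assoc, hmid]
        abel
    | zero =>
      rw [P.ιJ_zero, zero_mul, map_zero, X.zero_smul']
    | add y z _ _ hy hz =>
      rw [P.ιJ_add, add_mul, map_add, map_add, hy, hz, X.add_smul]
    | smul r y _ hy =>
      rw [P.ιJ_rsmul, smul_mul_assoc, map_smul, map_smul, hy, X.smul_rsmul]
  -- gradedness of `Hl` on homogeneous components
  have hproj : ∀ (k : ℤ) (y : P.E.carrier),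
      Hl (projOf P.E.gr P.E.internal k y) ∈ X.gr (k + n) := by
    intro k y
    induction P.span y using Submodule.span_induction with
    | mem z hz =>
      obtain ⟨b, c, rfl⟩ := hz
      induction b using P.B.homog_ind with
      | h0 =>
        rw [P.inl.map_zero', zero_mul, projOf_of_mem_same _ _ (Submodule.zero_mem _),
          map_zero]
        exact Submodule.zero_mem _
      | hadd b b' hb hb' =>
        rw [P.inl.map_add, add_mul, projOf_add, map_add]
        exact Submodule.add_mem _ hb hb'
      | hhom i b hb =>
        induction c using P.B.homog_ind with
        | h0 =>
          rw [P.inr.map_zero', mul_zero, projOf_of_mem_same _ _ (Submodule.zero_mem _),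
            map_zero]
          exact Submodule.zero_mem _
        | hadd c c' hc hc' =>
          rw [P.inr.map_add, mul_add, projOf_add, map_add]
          exact Submodule.add_mem _ hc hc'
        | hhom j c hc =>
          have he : P.inl.toFun b * P.inr.toFun c ∈ P.E.gr (i + j) :=
            P.E.mul_mem (P.inl.map_gr hb) (P.inr.map_gr hc)
          by_cases hij : i + j = k
          · rw [projOf_of_mem_same _ _ (hij ▸ he), hgen]
            have : X.smul (D b) (P.inr.toFun c) ∈ X.gr (i + n + j) :=
              X.smul_mem (hD.2.2.2.1 i b hb) (P.inr.map_gr hc)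
            have heq : i + n + j = k + n := by omega
            exact heq ▸ this
          · rw [projOf_of_mem_ne _ _ he hij, map_zero]
            exact Submodule.zero_mem _
    | zero =>
      rw [projOf_of_mem_same _ _ (Submodule.zero_mem _), map_zero]
      exact Submodule.zero_mem _
    | add y z _ _ hy hz =>
      rw [projOf_add, map_add]
      exact Submodule.add_mem _ hy hz
    | smul r y _ hy =>
      rw [projOf_rsmul, map_smul]
      exact Submodule.smul_mem _ r hy
  refine ⟨fun x => Hl (P.ιJ x), ⟨?_, ?_, ?_, ?_⟩, ?_⟩
  · intro x y; dsimp only; rw [P.ιJ_add, map_add]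
  · intro r x; dsimp only; rw [P.ιJ_rsmul, map_smul]
  · -- E-linearity
    intro x e
    dsimp only
    rw [P.ιJ_smul]
    induction P.span e using Submodule.span_induction with
    | mem z hz =>
      obtain ⟨u, v, rfl⟩ := hz
      rw [← mul_assoc, ha (P.ιJ x * P.inl.toFun u) v, hbl x u, X.smul_mul]
    | zero => rw [mul_zero, map_zero, X.smul_zero']
    | add y z _ _ hy hz => rw [mul_add, map_add, hy, hz, X.smul_add]
    | smul r y _ hy => rw [mul_smul_comm, map_smul, hy, X.smul_rsmul_right]
  · -- gradedness
    intro i x hx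
    have hmem : P.ιJ x ∈ P.E.gr i := (P.ιJ_gr i x).mp hx
    have := hproj i (P.ιJ x)
    rwa [projOf_of_mem_same _ _ hmem] at this
  · -- f ∘ δ = D
    intro b
    dsimp only
    rw [P.ιJ_δ, map_sub,
      show P.inl.toFun b = P.inl.toFun b * P.inr.toFun 1 by rw [P.inr.map_one, mul_one],
      show P.inr.toFun b = P.inl.toFun 1 * P.inr.toFun b by rw [P.inl.map_one, one_mul],
      hgen, hgen, hD.map_one' P, X.zero_smul', sub_zero, P.inr.map_one, X.smul_one]

end VarpiHelpers

/-- For a DG `Bᵉ`-module `X`, the map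
`ϖ : Hom_{Bᵉ}(J, X) → Der_A(B, X)`, `f ↦ f ∘ δ`, is an isomorphism of topological
left DG `B`-modules.  (In this encoding `ϖ` is literally `f ↦ f ∘ δ`, so additivity
and compatibility with the left `B`-actions hold definitionally; the statement
records that `ϖ` maps degree-`n` homogeneous elements to degree-`n` homogeneous
elements, is bijective, intertwines the differentials, and is a homeomorphism.) -/
theorem varpi_isomorphism {R : Type u} [CommRing R] (P : EnvSetup R) (X : DGMod P.E) :
    -- ϖ sends graded B^e-linear maps of degree n to A-derivations of degree n
    (∀ (n : ℤ) (f : P.J.carrier → X.carrier), IsGLin P.J X n f →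
      IsDer P X n (fun b => f (P.δ b))) ∧
    (∀ f : P.J.carrier → X.carrier, InSHom P.J X f → InSDer P X (fun b => f (P.δ b))) ∧
    -- ϖ is injective
    (∀ f g : P.J.carrier → X.carrier, InSHom P.J X f → InSHom P.J X g →
      (∀ b, f (P.δ b) = g (P.δ b)) → f = g) ∧
    -- ϖ is surjective
    (∀ D : P.B.carrier → X.carrier, InSDer P X D →
      ∃ f : P.J.carrier → X.carrier, InSHom P.J X f ∧ ∀ b, D b = f (P.δ b)) ∧
    -- ϖ intertwines the differentials: ∂^Der(f ∘ δ) = (∂^Hom f) ∘ δ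
    (∀ (n : ℤ) (f : P.J.carrier → X.carrier), IsGLin P.J X n f →
      (fun b => X.d (f (P.δ b)) - sgn n • f (P.δ (P.B.d b)))
        = (fun b => X.d (f (P.δ b)) - sgn n • f (P.J.d (P.δ b)))) ∧
    -- ϖ is continuous
    (∀ n : ℤ, ∃ m : ℤ, ∀ f : P.J.carrier → X.carrier, InSHom P.J X f →
      (∀ k : ℤ, k ≤ m → ∀ x ∈ P.J.gr k, f x = 0) →
      ∀ k : ℤ, k ≤ n → ∀ b ∈ P.B.gr k, f (P.δ b) = 0) ∧
    -- ϖ⁻¹ is continuous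
    (∀ n : ℤ, ∃ m : ℤ, ∀ f : P.J.carrier → X.carrier, InSHom P.J X f →
      (∀ k : ℤ, k ≤ m → ∀ b ∈ P.B.gr k, f (P.δ b) = 0) →
      ∀ k : ℤ, k ≤ n → ∀ x ∈ P.J.gr k, f x = 0) := by
  classical
  have main1 : ∀ (n : ℤ) (f : P.J.carrier → X.carrier), IsGLin P.J X n f →
      IsDer P X n (fun b => f (P.δ b)) := by
    intro n f hf
    obtain ⟨hadd, hr, hsm, hgr⟩ := hf
    refine ⟨?_, ?_, ?_, ?_, ?_⟩
    · intro b c; dsimp only; rw [P.δ_add, hadd]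
    · intro r b; dsimp only; rw [P.δ_rsmul, hr]
    · intro b a; dsimp only; rw [P.δ_phi, hsm]
    · intro i b hb; exact hgr i _ (P.δ_mem hb)
    · intro i j b c hb hc
      dsimp only
      rw [P.δ_mul hb hc, hadd, hsm, add_map_zsmul f hadd, hsm]
  refine ⟨main1, ?_, ?_, ?_, ?_, ?_, ?_⟩
  · rintro f ⟨s, g, hg, hsum⟩
    exact ⟨s, fun n b => g n (P.δ b), fun n hn => main1 n (g n) (hg n hn),
      fun b => hsum (P.δ b)⟩
  · intro f g hf hg h
    exact InSHom_ext P hf hg h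
  · rintro D ⟨s, g, hg, hsum⟩
    set F : ℤ → P.J.carrier → X.carrier := fun n =>
      if hn : n ∈ s then Classical.choose (surj_single P (hg n hn)) else fun _ => 0
      with hF
    refine ⟨fun x => ∑ n ∈ s, F n x, ⟨s, F, ?_, fun x => rfl⟩, ?_⟩
    · intro n hn
      rw [hF]
      dsimp only
      rw [dif_pos hn]
      exact (Classical.choose_spec (surj_single P (hg n hn))).1
    · intro b
      rw [hsum b]
      refine Finset.sum_congr rfl fun n hn => ?_
      rw [hF]
      dsimp only
      rw [dif_pos hn]
      exact ((Classical.choose_spec (surj_single P (hg n hn))).2 b).symm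
  · intro n f _
    funext b
    rw [P.δ_d]
  · intro n
    exact ⟨n, fun f _ h k hk b hb => h k hk _ (P.δ_mem hb)⟩
  · intro n
    exact ⟨n, fun f hf h => vanish_low P hf n h⟩


end DG
end
end

section
/- For a semifree DG B-module N with semifree basis {e_λ}, the Atiyah homomorphism satisfies α = −∂^Conn(φ(δ)), where φ(δ) is the trivial δ-connection on N along J with respect to {e_λ}. -/
/- ------------------------------------------------------------------
A self-contained framework for differential graded (DG) homological
algebra, following Nasseh–Ono–Yoshino, "Connections and naïve lifting
of DG modules".
------------------------------------------------------------------ -/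

noncomputable section

namespace DG

universe u


section AuxStmt14

variable {R : Type u} [CommRing R]

private lemma sgn_zero_eq_one : sgn (0 : ℤ) = 1 := by
  simp [sgn]

private lemma sgn_mul_self' (n : ℤ) : sgn n * sgn n = 1 := by
  unfold sgn
  rw [← Units.val_mul, Int.units_mul_self]
  rfl

private lemma dgmod_smul_zero {S : DGAlg R} (M : DGMod S) (m : M.carrier) :
    M.smul m 0 = 0 := by
  have h := M.smul_add m 0 0
  rw [add_zero] at h
  exact left_eq_add.mp h

private lemma dgmod_zero_smul {S : DGAlg R} (M : DGMod S) (a : S.carrier) :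
    M.smul 0 a = 0 := by
  have h := M.add_smul 0 0 a
  rw [add_zero] at h
  exact left_eq_add.mp h

private lemma map_add_zsmul {M N' : Type*} [AddCommGroup M] [AddCommGroup N']
    (f : M → N') (hf : ∀ x y, f (x + y) = f x + f y) (n : ℤ) (x : M) :
    f (n • x) = n • f x :=
  map_zsmul (AddMonoidHom.mk' f hf) n x

end AuxStmt14

/-- For a semifree DG `B`-module `N` with semifree basis `{e_λ}`
(`∂^N(e_λ) = Σ_{μ<λ} e_μ b_{μλ}`), the Atiyah homomorphism `α : N → N ⊗_B J(-1)`
satisfies `α = -∂^Conn(φ(δ))`, where `φ(δ)` is the trivial `δ`-connection on `N`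
along `J` with respect to `{e_λ}` (and `δ` has degree `0`). -/
theorem atiyah_eq_neg_d_trivial_connection {R : Type u} [CommRing R] {P : EnvSetup R}
    {N : DGMod P.B} (τ : TensorBX P N P.J)
    {ι : Type u} [LinearOrder ι] [WellFoundedLT ι]
    (e : ι → N.carrier) (deg : ι → ℤ) (hmem : ∀ l, e l ∈ N.gr (deg l))
    (hb : Function.Bijective fun c : ι →₀ P.B.carrier =>
      c.sum fun l b => N.smul (e l) b)
    (cf : ι → ι →₀ P.B.carrier) (hsupp : ∀ l m, m ∈ (cf l).support → m < l)
    (hdN : ∀ l, N.d (e l) = (cf l).sum fun m b => N.smul (e m) b) :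
    ∀ x, atiyah τ e hb cf x
      = -(τ.T.d (trivConn τ e deg hb 0 P.δ x)
          - trivConn τ e deg hb 0 P.δ (N.d x)) := by
  classical
  have hsgn0 : ∀ k : ℤ, sgn (0 * k) = 1 := fun k => by rw [zero_mul, sgn_zero_eq_one]
  -- basic facts about δ
  have hδadd : ∀ u v, P.δ (u + v) = P.δ u + P.δ v := by
    intro u v
    apply P.ιJ_inj
    rw [P.ιJ_add, P.ιJ_δ, P.ιJ_δ, P.ιJ_δ, P.inl.map_add, P.inr.map_add]
    abel
  have hδzero : P.δ 0 = 0 := by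
    have h := hδadd 0 0
    rw [add_zero] at h
    exact left_eq_add.mp h
  have hδzsmul : ∀ (n : ℤ) (u), P.δ (n • u) = n • P.δ u := fun n u =>
    map_add_zsmul P.δ hδadd n u
  have hδd : ∀ u, P.δ (P.B.d u) = P.J.d (P.δ u) := by
    intro u
    apply P.ιJ_inj
    rw [P.ιJ_δ, P.ιJ_d, P.ιJ_δ, map_sub, ← P.inl.map_d, ← P.inr.map_d]
  have hδmem : ∀ {i : ℤ} {u}, u ∈ P.B.gr i → P.δ u ∈ P.J.gr i := by
    intro i u hu
    rw [P.ιJ_gr, P.ιJ_δ]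
    exact sub_mem (P.inl.map_gr hu) (P.inr.map_gr hu)
  have hιzs : ∀ (n : ℤ) x, P.ιJ (n • x) = n • P.ιJ x := fun n x =>
    map_add_zsmul P.ιJ P.ιJ_add n x
  have hδleib : ∀ {i j : ℤ} (u v : P.B.carrier), u ∈ P.B.gr i → v ∈ P.B.gr j →
      P.δ (u * v) = P.J.smul (P.δ u) (P.inr.toFun v)
        + sgn (i * j) • P.J.smul (P.δ v) (P.inl.toFun u) := by
    intro i j u v hu hv
    apply P.ιJ_inj
    rw [P.ιJ_add, hιzs, P.ιJ_smul, P.ιJ_smul, P.ιJ_δ, P.ιJ_δ, P.ιJ_δ,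
      P.inl.map_mul, P.inr.map_mul,
      ← P.E.gcomm (P.inl.map_gr hu) (sub_mem (P.inl.map_gr hv) (P.inr.map_gr hv)),
      sub_mul, mul_sub]
    abel
  -- basic facts about t
  have ht0r : ∀ m, τ.t m 0 = 0 := by
    intro m
    have h := τ.t_addr m 0 0
    rw [add_zero] at h
    exact left_eq_add.mp h
  have ht0l : ∀ y, τ.t 0 y = 0 := by
    intro y
    have h := τ.t_addl 0 0 y
    rw [add_zero] at h
    exact left_eq_add.mp h
  have htzs : ∀ (n : ℤ) m y, τ.t m (n • y) = n • τ.t m y := fun n m y =>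
    map_add_zsmul (τ.t m) (τ.t_addr m) n y
  have hNzs : ∀ (n : ℤ) (m : N.carrier) (u), N.smul m (n • u) = n • N.smul m u :=
    fun n m u => map_add_zsmul (N.smul m) (N.smul_add m) n u
  -- the key Leibniz-type claim
  have hclaim : ∀ (m : ι) {j : ℤ} (b : P.B.carrier), b ∈ P.B.gr j → ∀ u : P.B.carrier,
      τ.t (e m) (P.δ (u * b))
        = τ.T.smul (τ.t (e m) (P.δ u)) b + τ.t (N.smul (e m) u) (P.δ b) := by
    intro m j b hbj u
    have hu : u ∈ ⨆ i, P.B.gr i := by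
      rw [P.B.internal.submodule_iSup_eq_top]
      exact Submodule.mem_top
    refine Submodule.iSup_induction (motive := fun u => τ.t (e m) (P.δ (u * b))
        = τ.T.smul (τ.t (e m) (P.δ u)) b + τ.t (N.smul (e m) u) (P.δ b))
      P.B.gr hu ?_ ?_ ?_
    · intro i v hvi
      rw [hδleib v b hvi hbj, τ.t_addr, τ.t_smul, htzs,
        τ.t_bal (e m) (P.δ b) v hvi (hδmem hbj)]
    · simp only [zero_mul, hδzero, ht0r, ht0l, dgmod_zero_smul, dgmod_smul_zero, add_zero]
    · intro y z hy hz
      rw [add_mul, hδadd, τ.t_addr, hy, hz, hδadd, τ.t_addr, τ.T.add_smul,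
        N.smul_add, τ.t_addl]
      abel
  -- Finsupp machinery
  have hsum_h0 : ∀ l : ι, N.smul (e l) (0 : P.B.carrier) = 0 := fun l =>
    dgmod_smul_zero N (e l)
  have hfadd' : ∀ (l : ι) (b₁ b₂ : P.B.carrier),
      N.smul (e l) (b₁ + b₂) = N.smul (e l) b₁ + N.smul (e l) b₂ := fun l =>
    N.smul_add (e l)
  have happ : ∀ y : N.carrier,
      ((Equiv.ofBijective _ hb).symm y).sum (fun l b => N.smul (e l) b) = y := fun y =>
    Equiv.apply_symm_apply (Equiv.ofBijective _ hb) y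
  have hsymm : ∀ (c : ι →₀ P.B.carrier) (y : N.carrier),
      (c.sum fun l b => N.smul (e l) b) = y → (Equiv.ofBijective _ hb).symm y = c := by
    intro c y h
    rw [Equiv.symm_apply_eq]
    exact h.symm
  have hsymm_single : ∀ (l : ι) (b : P.B.carrier),
      (Equiv.ofBijective _ hb).symm (N.smul (e l) b) = Finsupp.single l b := fun l b =>
    hsymm _ _ (Finsupp.sum_single_index (hsum_h0 l))
  have hsymm_add : ∀ y z : N.carrier, (Equiv.ofBijective _ hb).symm (y + z)
      = (Equiv.ofBijective _ hb).symm y + (Equiv.ofBijective _ hb).symm z := by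
    intro y z
    refine hsymm _ _ ?_
    rw [Finsupp.sum_add_index' (h := fun l' b'' => N.smul (e l') b'') hsum_h0 hfadd', happ, happ]
  have hsymm_zero : (Equiv.ofBijective _ hb).symm 0 = 0 :=
    hsymm 0 0 Finsupp.sum_zero_index
  -- unfolded descriptions of the two maps
  have hGeq : ∀ y, trivConn τ e deg hb 0 P.δ y
      = ((Equiv.ofBijective _ hb).symm y).sum fun l b => τ.t (e l) (P.δ b) := by
    intro y
    unfold trivConn
    exact Finsupp.sum_congr fun l _ => by rw [hsgn0, one_smul]
  have hAeq : ∀ y, atiyah τ e hb cf y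
      = ((Equiv.ofBijective _ hb).symm y).sum
        fun l b => τ.T.smul ((cf l).sum fun m b' => τ.t (e m) (P.δ b')) b :=
    fun y => rfl
  have hFG0 : ∀ l : ι, τ.t (e l) (P.δ (0 : P.B.carrier)) = 0 := fun l => by
    rw [hδzero, ht0r]
  have hFGadd : ∀ (l : ι) (b₁ b₂ : P.B.carrier),
      τ.t (e l) (P.δ (b₁ + b₂)) = τ.t (e l) (P.δ b₁) + τ.t (e l) (P.δ b₂) :=
    fun l b₁ b₂ => by rw [hδadd, τ.t_addr]
  have hFA0 : ∀ l : ι,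
      τ.T.smul ((cf l).sum fun m b' => τ.t (e m) (P.δ b')) (0 : P.B.carrier) = 0 :=
    fun l => dgmod_smul_zero τ.T _
  have hFAadd : ∀ (l : ι) (b₁ b₂ : P.B.carrier),
      τ.T.smul ((cf l).sum fun m b' => τ.t (e m) (P.δ b')) (b₁ + b₂)
        = τ.T.smul ((cf l).sum fun m b' => τ.t (e m) (P.δ b')) b₁
          + τ.T.smul ((cf l).sum fun m b' => τ.t (e m) (P.δ b')) b₂ :=
    fun l b₁ b₂ => τ.T.smul_add _ b₁ b₂
  -- the key computation on generators
  have hkey : ∀ (l : ι) {j : ℤ} (b : P.B.carrier), b ∈ P.B.gr j →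
      atiyah τ e hb cf (N.smul (e l) b)
        = trivConn τ e deg hb 0 P.δ (N.d (N.smul (e l) b))
          - τ.T.d (trivConn τ e deg hb 0 P.δ (N.smul (e l) b)) := by
    intro l j b hbj
    have h0B : ∀ m : ι, N.smul (e m) (0 * b) = 0 := fun m => by
      rw [zero_mul]; exact hsum_h0 m
    have haddB : ∀ (m : ι) (b₁ b₂ : P.B.carrier), N.smul (e m) ((b₁ + b₂) * b)
        = N.smul (e m) (b₁ * b) + N.smul (e m) (b₂ * b) := fun m b₁ b₂ => by
      rw [add_mul]; exact hfadd' m _ _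
    have h0FGB : ∀ m : ι, τ.t (e m) (P.δ (0 * b)) = 0 := fun m => by
      rw [zero_mul]; exact hFG0 m
    have haddFGB : ∀ (m : ι) (b₁ b₂ : P.B.carrier), τ.t (e m) (P.δ ((b₁ + b₂) * b))
        = τ.t (e m) (P.δ (b₁ * b)) + τ.t (e m) (P.δ (b₂ * b)) := fun m b₁ b₂ => by
      rw [add_mul]; exact hFGadd m _ _
    have hGx : trivConn τ e deg hb 0 P.δ (N.smul (e l) b) = τ.t (e l) (P.δ b) := by
      rw [hGeq, hsymm_single, Finsupp.sum_single_index (h := fun l' b'' => τ.t (e l') (P.δ b'')) (hFG0 l)]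
    have hAx : atiyah τ e hb cf (N.smul (e l) b)
        = τ.T.smul ((cf l).sum fun m b' => τ.t (e m) (P.δ b')) b := by
      rw [hAeq, hsymm_single, Finsupp.sum_single_index (h := fun l' b'' => τ.T.smul ((cf l').sum fun m b' => τ.t (e m) (P.δ b')) b'') (hFA0 l)]
    have hpull : ∀ c : ι →₀ P.B.carrier,
        N.smul (c.sum fun m b' => N.smul (e m) b') b
          = c.sum fun m b' => N.smul (e m) (b' * b) := by
      intro c
      induction c using Finsupp.induction with
      | zero => rw [Finsupp.sum_zero_index, Finsupp.sum_zero_index, dgmod_zero_smul]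
      | single_add a v c _ _ ih =>
        rw [Finsupp.sum_add_index' (h := fun l' b'' => N.smul (e l') b'') hsum_h0 hfadd',
          Finsupp.sum_add_index' (h := fun m b' => N.smul (e m) (b' * b)) h0B haddB,
          Finsupp.sum_single_index (h := fun l' b'' => N.smul (e l') b'') (hsum_h0 a),
          Finsupp.sum_single_index (h := fun m b' => N.smul (e m) (b' * b)) (h0B a),
          N.add_smul, ih, ← N.smul_mul]
    have hdx : N.d (N.smul (e l) b)
        = ((cf l).sum fun m b' => N.smul (e m) (b' * b))
          + sgn (deg l) • N.smul (e l) (P.B.d b) := by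
      rw [N.leibniz b (hmem l), hdN l, hpull]
    have hc' : (Equiv.ofBijective _ hb).symm (N.d (N.smul (e l) b))
        = ((cf l).sum fun m b' => Finsupp.single m (b' * b))
          + sgn (deg l) • Finsupp.single l (P.B.d b) := by
      refine hsymm _ _ ?_
      rw [hdx, Finsupp.sum_add_index' (h := fun l' b'' => N.smul (e l') b'') hsum_h0 hfadd',
        Finsupp.sum_sum_index (h := fun l' b'' => N.smul (e l') b'') hsum_h0 hfadd',
        Finsupp.smul_single, Finsupp.sum_single_index (h := fun l' b'' => N.smul (e l') b'') (hsum_h0 l), hNzs]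
      congr 1
      exact Finsupp.sum_congr fun m _ => Finsupp.sum_single_index (hsum_h0 m)
    have hsum3 : ∀ c : ι →₀ P.B.carrier,
        (c.sum fun m b' => τ.t (e m) (P.δ (b' * b)))
          = τ.T.smul (c.sum fun m b' => τ.t (e m) (P.δ b')) b
            + τ.t (c.sum fun m b' => N.smul (e m) b') (P.δ b) := by
      intro c
      induction c using Finsupp.induction with
      | zero =>
        rw [Finsupp.sum_zero_index, Finsupp.sum_zero_index, Finsupp.sum_zero_index,
          dgmod_zero_smul, ht0l, add_zero]
      | single_add a v c _ _ ih =>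
        rw [Finsupp.sum_add_index' (h := fun m b' => τ.t (e m) (P.δ (b' * b))) h0FGB haddFGB,
          Finsupp.sum_add_index' (h := fun l' b'' => τ.t (e l') (P.δ b'')) hFG0 hFGadd,
          Finsupp.sum_add_index' (h := fun l' b'' => N.smul (e l') b'') hsum_h0 hfadd',
          Finsupp.sum_single_index (h := fun m b' => τ.t (e m) (P.δ (b' * b))) (h0FGB a),
          Finsupp.sum_single_index (h := fun l' b'' => τ.t (e l') (P.δ b'')) (hFG0 a),
          Finsupp.sum_single_index (h := fun l' b'' => N.smul (e l') b'') (hsum_h0 a),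
          ih, hclaim a b hbj v, τ.T.add_smul, τ.t_addl]
        abel
    have hGdx : trivConn τ e deg hb 0 P.δ (N.d (N.smul (e l) b))
        = τ.T.smul ((cf l).sum fun m b' => τ.t (e m) (P.δ b')) b
          + τ.t (N.d (e l)) (P.δ b)
          + sgn (deg l) • τ.t (e l) (P.δ (P.B.d b)) := by
      rw [hGeq, hc', Finsupp.sum_add_index' (h := fun l' b'' => τ.t (e l') (P.δ b'')) hFG0 hFGadd,
        Finsupp.sum_sum_index (h := fun l' b'' => τ.t (e l') (P.δ b'')) hFG0 hFGadd,
        Finsupp.smul_single, Finsupp.sum_single_index (h := fun l' b'' => τ.t (e l') (P.δ b'')) (hFG0 l), hδzsmul, htzs]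
      congr 1
      have hstep : ((cf l).sum fun m b' =>
            (Finsupp.single m (b' * b)).sum fun l' b'' => τ.t (e l') (P.δ b''))
          = (cf l).sum fun m b' => τ.t (e m) (P.δ (b' * b)) :=
        Finsupp.sum_congr fun m _ => Finsupp.sum_single_index (hFG0 m)
      rw [hstep, hsum3 (cf l), ← hdN l]
    have hTdGx : τ.T.d (trivConn τ e deg hb 0 P.δ (N.smul (e l) b))
        = τ.t (N.d (e l)) (P.δ b) + sgn (deg l) • τ.t (e l) (P.δ (P.B.d b)) := by
      rw [hGx, τ.t_d (e l) (P.δ b) (hmem l), hδd]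
    rw [hAx, hGdx, hTdGx]
    abel
  -- additivity of both sides
  have hGadd : ∀ y z, trivConn τ e deg hb 0 P.δ (y + z)
      = trivConn τ e deg hb 0 P.δ y + trivConn τ e deg hb 0 P.δ z := by
    intro y z
    rw [hGeq, hGeq, hGeq, hsymm_add, Finsupp.sum_add_index' (h := fun l' b'' => τ.t (e l') (P.δ b'')) hFG0 hFGadd]
  have hAadd : ∀ y z, atiyah τ e hb cf (y + z)
      = atiyah τ e hb cf y + atiyah τ e hb cf z := by
    intro y z
    rw [hAeq, hAeq, hAeq, hsymm_add, Finsupp.sum_add_index' (h := fun l' b'' => τ.T.smul ((cf l').sum fun m b' => τ.t (e m) (P.δ b')) b'') hFA0 hFAadd]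
  have hG0 : trivConn τ e deg hb 0 P.δ 0 = 0 := by
    rw [hGeq, hsymm_zero, Finsupp.sum_zero_index]
  have hA0 : atiyah τ e hb cf 0 = 0 := by
    rw [hAeq, hsymm_zero, Finsupp.sum_zero_index]
  have hQzero : atiyah τ e hb cf 0
      = trivConn τ e deg hb 0 P.δ (N.d 0) - τ.T.d (trivConn τ e deg hb 0 P.δ 0) := by
    simp only [hA0, map_zero, hG0, sub_zero]
  have hQadd : ∀ y z,
      (atiyah τ e hb cf y
        = trivConn τ e deg hb 0 P.δ (N.d y) - τ.T.d (trivConn τ e deg hb 0 P.δ y)) →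
      (atiyah τ e hb cf z
        = trivConn τ e deg hb 0 P.δ (N.d z) - τ.T.d (trivConn τ e deg hb 0 P.δ z)) →
      atiyah τ e hb cf (y + z)
        = trivConn τ e deg hb 0 P.δ (N.d (y + z))
          - τ.T.d (trivConn τ e deg hb 0 P.δ (y + z)) := by
    intro y z hy hz
    rw [hAadd, hy, hz, map_add, hGadd, hGadd, map_add]
    abel
  have hQsm : ∀ (a : ι) (v : P.B.carrier),
      atiyah τ e hb cf (N.smul (e a) v)
        = trivConn τ e deg hb 0 P.δ (N.d (N.smul (e a) v))
          - τ.T.d (trivConn τ e deg hb 0 P.δ (N.smul (e a) v)) := by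
    intro a v
    have hv : v ∈ ⨆ i, P.B.gr i := by
      rw [P.B.internal.submodule_iSup_eq_top]
      exact Submodule.mem_top
    refine Submodule.iSup_induction (motive := fun v =>
        atiyah τ e hb cf (N.smul (e a) v)
          = trivConn τ e deg hb 0 P.δ (N.d (N.smul (e a) v))
            - τ.T.d (trivConn τ e deg hb 0 P.δ (N.smul (e a) v)))
      P.B.gr hv (fun i w hw => hkey a w hw) ?_ ?_
    · show _ = _
      rw [dgmod_smul_zero]
      exact hQzero
    · intro w w' hw hw'
      show _ = _
      rw [N.smul_add]
      exact hQadd _ _ hw hw'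
  have hallc : ∀ c : ι →₀ P.B.carrier,
      atiyah τ e hb cf (c.sum fun l b' => N.smul (e l) b')
        = trivConn τ e deg hb 0 P.δ (N.d (c.sum fun l b' => N.smul (e l) b'))
          - τ.T.d (trivConn τ e deg hb 0 P.δ (c.sum fun l b' => N.smul (e l) b')) := by
    intro c
    induction c using Finsupp.induction with
    | zero =>
      rw [Finsupp.sum_zero_index]
      exact hQzero
    | single_add a v c _ _ ih =>
      rw [Finsupp.sum_add_index' (h := fun l' b'' => N.smul (e l') b'') hsum_h0 hfadd', Finsupp.sum_single_index (h := fun l' b'' => N.smul (e l') b'') (hsum_h0 a)]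
      exact hQadd _ _ (hQsm a v) ih
  intro x
  rw [neg_sub]
  have h := hallc ((Equiv.ofBijective _ hb).symm x)
  rwa [happ] at h


end DG
end
end
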